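/- arXiv:1301.4565 — 4 statements merged into one kernel-verified Lean document; each statement's English description precedes it below -/
import Mathlib

section
/- For all natural numbers n and k with k ≤ n, ∑_{l=0}^{n} C(n+1, l+1) · C(-1/2, l-k) = C(n + 1/2, n - k) = (2n+1)!! / (2^{n-k} (n-k)! (2k+1)!!), where C(-1/2, j) denotes the generalized binomial coefficient ((-1/2)(-1/2-1)···(-1/2-j+1))/j! for j ≥ 0 and is 0 for j < 0. -/
/-- Generalized binomial coefficient `C(x, j)` for real `x` and integer `j`,
equal to `x (x-1) ⋯ (x-j+1) / j!` for `j ≥ 0` and `0` for `j < 0`. -/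
noncomputable def gchoose (x : ℝ) (j : ℤ) : ℝ :=
  if 0 ≤ j then (∏ i ∈ Finset.range j.toNat, (x - i)) / (Nat.factorial j.toNat : ℝ) else 0

lemma gchoose_neg (x : ℝ) {j : ℤ} (h : j < 0) : gchoose x j = 0 := by
  simp [gchoose, not_le.mpr h]

lemma gchoose_ofNat (x : ℝ) (m : ℕ) :
    gchoose x (m : ℤ) = (∏ i ∈ Finset.range m, (x - i)) / (Nat.factorial m : ℝ) := by
  simp [gchoose]

lemma gchoose_pascal (x : ℝ) (m : ℤ) :
    gchoose (x + 1) m = gchoose x m + gchoose x (m - 1) := by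
  rcases lt_or_ge m 0 with hm | hm
  · rw [gchoose_neg _ hm, gchoose_neg _ hm, gchoose_neg x (by omega)]; ring
  · lift m to ℕ using hm
    cases m with
    | zero => norm_num [gchoose]
    | succ s =>
      have h1 : ((s:ℤ) + 1) - 1 = (s:ℤ) := by ring
      push_cast
      rw [h1, show ((s:ℤ)+1) = ((s+1 : ℕ) : ℤ) by push_cast; ring,
        gchoose_ofNat, gchoose_ofNat, gchoose_ofNat,
        Finset.prod_range_succ' (fun i => x + 1 - i), Finset.prod_range_succ]
      have he : (∏ i ∈ Finset.range s, (x + 1 - ↑(i + 1))) = ∏ i ∈ Finset.range s, (x - i) := by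
        apply Finset.prod_congr rfl; intro i _; push_cast; ring
      rw [he, Nat.factorial_succ]
      have hs : (Nat.factorial s : ℝ) ≠ 0 := Nat.cast_ne_zero.mpr (Nat.factorial_ne_zero s)
      have hs1 : ((s:ℝ) + 1) ≠ 0 := by positivity
      push_cast
      field_simp
      ring

lemma gchoose_vandermonde (x : ℝ) (N : ℕ) (m : ℤ) :
    ∑ j ∈ Finset.range (N + 1), (Nat.choose N j : ℝ) * gchoose x (m - j)
      = gchoose (x + N) m := by
  induction N generalizing m with
  | zero => simp
  | succ N ih =>
    rw [Finset.sum_range_succ' (fun j => (Nat.choose (N+1) j : ℝ) * gchoose x (m - j))]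
    have h1 : ∀ j ∈ Finset.range (N+1),
        (Nat.choose (N+1) (j+1) : ℝ) * gchoose x (m - (j+1 : ℕ))
          = (Nat.choose N j : ℝ) * gchoose x ((m-1) - j)
            + (Nat.choose N (j+1) : ℝ) * gchoose x (m - (j+1 : ℕ)) := by
      intro j _
      have hc : m - ((j+1:ℕ):ℤ) = (m - 1) - j := by push_cast; ring
      rw [Nat.choose_succ_succ, hc]
      push_cast
      ring
    rw [Finset.sum_congr rfl h1, Finset.sum_add_distrib, ih (m-1)]
    have h2 : ∑ j ∈ Finset.range (N+1), (Nat.choose N (j+1) : ℝ) * gchoose x (m - (j+1:ℕ))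
        = gchoose (x + N) m - (Nat.choose N 0 : ℝ) * gchoose x (m - (0:ℕ)) := by
      have h3 := Finset.sum_range_succ' (fun j => (Nat.choose N j : ℝ) * gchoose x (m - j)) (N+1)
      have h4 : ∑ j ∈ Finset.range (N+1+1), (Nat.choose N j : ℝ) * gchoose x (m - j)
          = gchoose (x + N) m := by
        rw [Finset.sum_range_succ, ih m]
        simp [Nat.choose_succ_self]
      rw [h4] at h3
      linarith [h3]
    rw [h2]
    push_cast
    rw [show x + ((N:ℝ) + 1) = (x + N) + 1 by ring, gchoose_pascal (x + N) m]
    simp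
    ring

lemma gchoose_closed (k m : ℕ) :
    gchoose (((k + m : ℕ) : ℝ) + 1/2) (m : ℤ)
      = (Nat.doubleFactorial (2 * (k + m) + 1) : ℝ) /
          (2 ^ m * (Nat.factorial m : ℝ) * (Nat.doubleFactorial (2 * k + 1) : ℝ)) := by
  induction m with
  | zero =>
    have hD : (Nat.doubleFactorial (2 * k + 1) : ℝ) ≠ 0 :=
      Nat.cast_ne_zero.mpr (Nat.doubleFactorial_pos _).ne'
    norm_num [gchoose]
    rw [div_self hD]
  | succ m ih =>
    rw [gchoose_ofNat, Finset.prod_range_succ' (fun i => ((k + (m+1) : ℕ) : ℝ) + 1/2 - i)]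
    rw [gchoose_ofNat] at ih
    have he : (∏ i ∈ Finset.range m, (((k + (m+1) : ℕ) : ℝ) + 1/2 - ↑(i+1)))
        = ∏ i ∈ Finset.range m, (((k + m : ℕ) : ℝ) + 1/2 - i) := by
      apply Finset.prod_congr rfl; intro i _; push_cast; ring
    rw [he]
    have hd : Nat.doubleFactorial (2 * (k + (m+1)) + 1)
        = (2 * (k + m) + 3) * Nat.doubleFactorial (2 * (k + m) + 1) := by
      have : 2 * (k + (m+1)) + 1 = (2 * (k + m) + 1) + 2 := by ring
      rw [this, Nat.doubleFactorial_add_two]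
    rw [hd, Nat.factorial_succ]
    have hf : (Nat.factorial m : ℝ) ≠ 0 := Nat.cast_ne_zero.mpr (Nat.factorial_ne_zero m)
    have hD : (Nat.doubleFactorial (2 * k + 1) : ℝ) ≠ 0 :=
      Nat.cast_ne_zero.mpr (Nat.doubleFactorial_pos _).ne'
    have h2 : (2:ℝ) ^ m ≠ 0 := by positivity
    have key : (∏ i ∈ Finset.range m, (((k + m : ℕ) : ℝ) + 1/2 - i))
        = (Nat.doubleFactorial (2 * (k + m) + 1) : ℝ) * (Nat.factorial m : ℝ) /
          (2 ^ m * (Nat.factorial m : ℝ) * (Nat.doubleFactorial (2 * k + 1) : ℝ)) := by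
      field_simp at ih ⊢
      linarith [ih]
    rw [key]
    push_cast
    field_simp
    ring

theorem binom_half_sum_identity (n k : ℕ) (hkn : k ≤ n) :
    (∑ l ∈ Finset.range (n + 1),
        (Nat.choose (n + 1) (l + 1) : ℝ) * gchoose (-1/2) ((l : ℤ) - (k : ℤ)))
      = gchoose ((n : ℝ) + 1/2) ((n : ℤ) - (k : ℤ)) ∧
    gchoose ((n : ℝ) + 1/2) ((n : ℤ) - (k : ℤ))
      = (Nat.doubleFactorial (2 * n + 1) : ℝ) /
          (2 ^ (n - k) * (Nat.factorial (n - k) : ℝ) *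
            (Nat.doubleFactorial (2 * k + 1) : ℝ)) := by
  have hm : (n:ℤ) - (k:ℤ) = ((n - k : ℕ) : ℤ) := by omega
  constructor
  · rw [← Finset.sum_range_reflect
      (fun l => (Nat.choose (n+1) (l+1) : ℝ) * gchoose (-1/2) ((l:ℤ) - k)) (n+1)]
    have h1 : ∀ j ∈ Finset.range (n+1),
        (Nat.choose (n+1) ((n+1-1-j)+1) : ℝ) * gchoose (-1/2) (((n+1-1-j : ℕ):ℤ) - k)
          = (Nat.choose (n+1) j : ℝ) * gchoose (-1/2) (((n:ℤ) - k) - j) := by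
      intro j hj
      rw [Finset.mem_range] at hj
      have e1 : (n+1-1-j)+1 = (n+1) - j := by omega
      have e2 : ((n+1-1-j : ℕ):ℤ) - k = ((n:ℤ) - k) - j := by omega
      rw [e1, e2, Nat.choose_symm (by omega)]
    rw [Finset.sum_congr rfl h1]
    have h2 := gchoose_vandermonde (-1/2) (n+1) ((n:ℤ) - k)
    rw [Finset.sum_range_succ] at h2
    have h3 : gchoose (-1/2) (((n:ℤ) - k) - ((n+1:ℕ):ℤ)) = 0 :=
      gchoose_neg _ (by push_cast; omega)
    rw [h3, mul_zero, add_zero] at h2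
    rw [h2]
    congr 1
    push_cast; ring
  · have h := gchoose_closed k (n - k)
    rw [Nat.add_sub_cancel' hkn] at h
    rw [hm, h]
end

section
/- For p ≥ 1 and 0 ≤ k ≤ p-1, ∑_{l=k}^{p-1} C(p, p-1-l) · C(-1/2, l-k) = (2p-1)!! / ((p-1-k)! (2k+1)!! 2^{p-k-1}), where C(-1/2, j) is the generalized binomial coefficient. -/
noncomputable def gcN (x : ℝ) (j : ℕ) : ℝ :=
  (∏ i ∈ Finset.range j, (x - i)) / (Nat.factorial j : ℝ)

lemma gchoose_natCast (x : ℝ) (j : ℕ) : gchoose x (j : ℤ) = gcN x j := by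
  simp [gchoose, gcN]

lemma gcN_pascal (y : ℝ) (m : ℕ) : gcN (y + 1) (m + 1) = gcN y (m + 1) + gcN y m := by
  have h1 : (∏ i ∈ Finset.range (m+1), (y + 1 - i)) = (y+1) * ∏ i ∈ Finset.range m, (y - i) := by
    rw [Finset.prod_range_succ', mul_comm]
    congr 1
    · norm_num
    · apply Finset.prod_congr rfl; intro i _; push_cast; ring
  have h2 : (∏ i ∈ Finset.range (m+1), (y - i)) = (∏ i ∈ Finset.range m, (y - i)) * (y - m) :=
    Finset.prod_range_succ _ _
  have hf' : (Nat.factorial m : ℝ) ≠ 0 := Nat.cast_ne_zero.mpr (Nat.factorial_ne_zero _)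
  have hfs : (Nat.factorial (m+1) : ℝ) = (m+1) * Nat.factorial m := by
    push_cast [Nat.factorial_succ]; ring
  unfold gcN
  rw [h1, h2, hfs]
  have hm1 : ((m : ℝ) + 1) ≠ 0 := by positivity
  field_simp
  ring

lemma vandermonde (x : ℝ) (n : ℕ) : ∀ m : ℕ,
    (∑ j ∈ Finset.range (m+1), (Nat.choose n (m - j) : ℝ) * gcN x j) = gcN (x + n) m := by
  induction n with
  | zero =>
    intro m
    rw [Finset.sum_eq_single m]
    · simp [gcN]
    · intro j hj hne
      have hj' : j < m + 1 := Finset.mem_range.mp hj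
      rw [Nat.choose_eq_zero_of_lt (by omega)]
      simp
    · intro h; exact absurd (Finset.self_mem_range_succ m) h
  | succ n ih =>
    intro m
    match m with
    | 0 => simp [gcN]
    | m + 1 =>
      have key : ∀ j ∈ Finset.range (m+1),
          (Nat.choose (n+1) (m + 1 - j) : ℝ) * gcN x j
            = (Nat.choose n (m + 1 - j) : ℝ) * gcN x j + (Nat.choose n (m - j) : ℝ) * gcN x j := by
        intro j hj
        have hj' : j ≤ m := Nat.lt_succ_iff.mp (Finset.mem_range.mp hj)
        have h : m + 1 - j = (m - j) + 1 := by omega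
        rw [h, Nat.choose_succ_succ']
        push_cast
        ring
      rw [Finset.sum_range_succ, Finset.sum_congr rfl key, Finset.sum_add_distrib]
      have e1 : (∑ j ∈ Finset.range (m+1), (Nat.choose n (m + 1 - j) : ℝ) * gcN x j)
            + (Nat.choose (n+1) (m + 1 - (m+1)) : ℝ) * gcN x (m+1)
          = ∑ j ∈ Finset.range (m+2), (Nat.choose n (m + 1 - j) : ℝ) * gcN x j := by
        conv_rhs => rw [Finset.sum_range_succ]
        simp only [Nat.sub_self, Nat.choose_zero_right, Nat.cast_one, one_mul]
      rw [add_assoc, add_comm (∑ j ∈ Finset.range (m+1), (Nat.choose n (m - j) : ℝ) * gcN x j),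
        ← add_assoc, e1, ih (m+1), ih m]
      have h : x + ((n:ℕ) + 1 : ℕ) = (x + n) + 1 := by push_cast; ring
      rw [h, gcN_pascal]

lemma prodOdd : ∀ m k : ℕ,
    (∏ i ∈ Finset.range m, (((m + k + 1 : ℕ) : ℝ) - 1/2 - i)) *
      (Nat.doubleFactorial (2*k+1) : ℝ) * 2 ^ m
    = (Nat.doubleFactorial (2*(m+k+1) - 1) : ℝ) := by
  intro m
  induction m with
  | zero =>
    intro k
    have h : 2*(0+k+1)-1 = 2*k+1 := by omega
    rw [h]; simp
  | succ m ih =>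
    intro k
    have h1 : (∏ i ∈ Finset.range (m+1), (((m + 1 + k + 1 : ℕ) : ℝ) - 1/2 - i))
        = (∏ i ∈ Finset.range m, (((m + k + 1 : ℕ) : ℝ) - 1/2 - i)) * (((m:ℝ)+k+1) + 1/2) := by
      rw [Finset.prod_range_succ', mul_comm, mul_comm (∏ i ∈ Finset.range m, (((m + k + 1 : ℕ) : ℝ) - 1/2 - i))]
      congr 1
      · push_cast; ring
      · apply Finset.prod_congr rfl; intro i _; push_cast; ring
    have h2 : 2*(m+1+k+1) - 1 = (2*m+2*k+1) + 2 := by omega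
    have h4 : 2*(m+k+1) - 1 = 2*m+2*k+1 := by omega
    have ihk := ih k
    rw [h4] at ihk
    rw [h1, h2, Nat.doubleFactorial_add_two]
    push_cast at ihk ⊢
    rw [pow_succ]
    linear_combination (2*(m:ℝ)+2*(k:ℝ)+3) * ihk

theorem binom_half_sum_identity_reindexed (p k : ℕ) (hp : 1 ≤ p) (hk : k ≤ p - 1) :
    (∑ l ∈ Finset.Icc k (p - 1),
        (Nat.choose p (p - 1 - l) : ℝ) * gchoose (-1/2) ((l : ℤ) - (k : ℤ)))
      = (Nat.doubleFactorial (2 * p - 1) : ℝ) /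
          ((Nat.factorial (p - 1 - k) : ℝ) * (Nat.doubleFactorial (2 * k + 1) : ℝ) *
            2 ^ (p - k - 1)) := by
  set m := p - 1 - k with hm
  have hpm : p = m + k + 1 := by omega
  have hsum : (∑ l ∈ Finset.Icc k (p - 1),
        (Nat.choose p (p - 1 - l) : ℝ) * gchoose (-1/2) ((l : ℤ) - (k : ℤ)))
      = ∑ j ∈ Finset.range (m+1), (Nat.choose p (m - j) : ℝ) * gcN (-1/2) j := by
    have hicc : Finset.Icc k (p-1) = Finset.Ico k p := by
      rw [← Finset.Ico_add_one_right_eq_Icc]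
      congr 1
      omega
    rw [hicc, Finset.sum_Ico_eq_sum_range]
    have hr : p - k = m + 1 := by omega
    rw [hr]
    apply Finset.sum_congr rfl
    intro j hj
    have h1 : p - 1 - (k + j) = m - j := by omega
    rw [h1]
    have h2 : ((k + j : ℕ) : ℤ) - (k : ℤ) = (j : ℤ) := by push_cast; ring
    rw [h2, gchoose_natCast]
  rw [hsum, vandermonde]
  have hkey := prodOdd m k
  have hpk : p - k - 1 = m := by omega
  rw [hpk]
  rw [← hpm] at hkey
  unfold gcN
  have hprod : (∏ i ∈ Finset.range m, ((-1/2 : ℝ) + p - i))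
      = ∏ i ∈ Finset.range m, ((p : ℝ) - 1/2 - i) := by
    apply Finset.prod_congr rfl; intro i _; ring
  rw [hprod]
  have hf : (Nat.factorial m : ℝ) ≠ 0 := Nat.cast_ne_zero.mpr (Nat.factorial_ne_zero _)
  have hdf : (Nat.doubleFactorial (2*k+1) : ℝ) ≠ 0 := by
    exact Nat.cast_ne_zero.mpr (Nat.doubleFactorial_pos _).ne'
  rw [← hkey]
  field_simp
end

section
/- Let p ≥ 1 and 0 ≤ k ≤ p-1. Then (1/2) C(-1/2, k) ∑_{l=k}^{p-1} C(p, p-1-l) C(-1/2, l-k) = ((-1)^k / k!) · (1/(p-k-1)!) · ((2p-1)!/(2k+1)) · (1/(2^{2p-1}(p-1)!)). -/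
lemma descPochhammer_smeval_prod (x : ℝ) (n : ℕ) :
    (descPochhammer ℤ n).smeval x = ∏ i ∈ Finset.range n, (x - i) := by
  induction n with
  | zero => simp [descPochhammer_zero, Polynomial.smeval_one]
  | succ n ih =>
      rw [descPochhammer_succ_right, Polynomial.smeval_mul, ih, Finset.prod_range_succ]
      congr 1
      rw [Polynomial.smeval_sub, Polynomial.smeval_X, Polynomial.smeval_natCast]
      simp

lemma gchoose_eq_ringChoose (x : ℝ) (n : ℕ) :
    gchoose x (n : ℤ) = Ring.choose x n := by
  have h := Ring.descPochhammer_eq_factorial_smul_choose x n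
  rw [descPochhammer_smeval_prod] at h
  have hfac : (Nat.factorial n : ℝ) ≠ 0 := by positivity
  rw [gchoose, if_pos (by positivity)]
  simp only [Int.toNat_natCast]
  rw [h, nsmul_eq_mul]
  field_simp

lemma prod_neg_half (k : ℕ) :
    ∏ i ∈ Finset.range k, ((-1/2 : ℝ) - i)
      = (-1) ^ k * (Nat.factorial (2 * k) : ℝ) / (4 ^ k * Nat.factorial k) := by
  induction k with
  | zero => simp
  | succ k ih =>
      rw [Finset.prod_range_succ, ih]
      have h1 : 2 * (k + 1) = (2 * k + 1) + 1 := by ring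
      rw [h1, Nat.factorial_succ, Nat.factorial_succ, Nat.factorial_succ]
      push_cast
      have hf : (Nat.factorial k : ℝ) ≠ 0 := by positivity
      field_simp
      ring

lemma prod_half_shift (k : ℕ) : ∀ n : ℕ,
    ∏ i ∈ Finset.range n, (((n : ℝ) + k + 1) - 1/2 - i)
      = (Nat.factorial (2 * (n + k) + 1) : ℝ) * (2 ^ k * Nat.factorial k) /
          ((Nat.factorial (2 * k + 1) : ℝ) * (2 ^ (n + k) * Nat.factorial (n + k)) * 2 ^ n) := by
  intro n
  induction n with
  | zero =>
      have h1 : (Nat.factorial (2 * k + 1) : ℝ) ≠ 0 := by positivity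
      have h2 : (Nat.factorial k : ℝ) ≠ 0 := by positivity
      simp only [Finset.range_zero, Finset.prod_empty, zero_add, pow_zero, mul_one]
      field_simp
  | succ n ih =>
      rw [Finset.prod_range_succ']
      have hre : ∏ i ∈ Finset.range n, ((((n + 1 : ℕ)) : ℝ) + k + 1 - 1/2 - ((i + 1 : ℕ) : ℝ))
          = ∏ i ∈ Finset.range n, (((n : ℝ) + k + 1) - 1/2 - i) :=
        Finset.prod_congr rfl (fun i _ => by push_cast; ring)
      rw [hre, ih]
      have h1 : 2 * ((n + 1) + k) + 1 = (2 * (n + k) + 1 + 1) + 1 := by ring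
      have h2 : (n + 1) + k = (n + k) + 1 := by ring
      rw [h1, h2]
      simp only [Nat.factorial_succ]
      push_cast
      have hf1 : (Nat.factorial (2 * (n + k) + 1) : ℝ) ≠ 0 := by positivity
      have hf2 : (Nat.factorial (n + k) : ℝ) ≠ 0 := by positivity
      have hf3 : (Nat.factorial (2 * k + 1) : ℝ) ≠ 0 := by positivity
      have hf4 : (Nat.factorial k : ℝ) ≠ 0 := by positivity
      field_simp
      ring

lemma vandermonde_half (p n : ℕ) :
    ∑ i ∈ Finset.range (n + 1),
        (Nat.choose p (n - i) : ℝ) * gchoose (-1/2) (i : ℤ)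
      = gchoose ((p : ℝ) - 1/2) (n : ℤ) := by
  have h := Ring.add_choose_eq (R := ℝ) (r := (-1/2 : ℝ)) (s := (p : ℝ)) n (Commute.all _ _)
  rw [Finset.Nat.sum_antidiagonal_eq_sum_range_succ_mk] at h
  have : (-1/2 : ℝ) + p = (p : ℝ) - 1/2 := by ring
  rw [this] at h
  rw [gchoose_eq_ringChoose, h]
  apply Finset.sum_congr rfl
  intro i _
  rw [gchoose_eq_ringChoose, Ring.choose_natCast]
  ring

theorem half_gchoose_sum_identity (p k : ℕ) (hp : 1 ≤ p) (hk : k ≤ p - 1) :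
    (1 / 2) * gchoose (-1/2) (k : ℤ) *
        ∑ l ∈ Finset.Icc k (p - 1),
          (Nat.choose p (p - 1 - l) : ℝ) * gchoose (-1/2) ((l : ℤ) - (k : ℤ))
      = ((-1 : ℝ) ^ k / (Nat.factorial k : ℝ)) * (1 / (Nat.factorial (p - k - 1) : ℝ)) *
          ((Nat.factorial (2 * p - 1) : ℝ) / (2 * k + 1)) *
          (1 / (2 ^ (2 * p - 1) * (Nat.factorial (p - 1) : ℝ))) := by
  set n := p - 1 - k with hn
  have hpn : p = n + k + 1 := by omega
  -- reindex the sum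
  have hIcc : Finset.Icc k (p - 1) = Finset.Ico k p := by
    rw [← Finset.Ico_add_one_right_eq_Icc]; congr 1; omega
  rw [hIcc, Finset.sum_Ico_eq_sum_range]
  have hpk : p - k = n + 1 := by omega
  rw [hpk]
  have hsum : ∑ i ∈ Finset.range (n + 1),
      (Nat.choose p (p - 1 - (k + i)) : ℝ) * gchoose (-1/2) ((↑(k + i) : ℤ) - (k : ℤ))
      = ∑ i ∈ Finset.range (n + 1), (Nat.choose p (n - i) : ℝ) * gchoose (-1/2) (i : ℤ) := by
    apply Finset.sum_congr rfl
    intro i hi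
    have h1 : p - 1 - (k + i) = n - i := by omega
    have h2 : ((↑(k + i) : ℤ) - (k : ℤ)) = (i : ℤ) := by push_cast; ring
    rw [h1, h2]
  rw [hsum, vandermonde_half p n]
  -- evaluate the two gchoose values
  have hg1 : gchoose (-1/2) (k : ℤ)
      = (-1) ^ k * (Nat.factorial (2 * k) : ℝ) / (4 ^ k * Nat.factorial k) /
          (Nat.factorial k : ℝ) := by
    rw [gchoose, if_pos (by positivity)]
    simp only [Int.toNat_natCast]
    rw [prod_neg_half]
  have hg2 : gchoose ((p : ℝ) - 1/2) (n : ℤ)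
      = (Nat.factorial (2 * (n + k) + 1) : ℝ) * (2 ^ k * Nat.factorial k) /
          ((Nat.factorial (2 * k + 1) : ℝ) * (2 ^ (n + k) * Nat.factorial (n + k)) * 2 ^ n) /
          (Nat.factorial n : ℝ) := by
    rw [gchoose, if_pos (by positivity)]
    simp only [Int.toNat_natCast]
    have hcast : (p : ℝ) = (n : ℝ) + k + 1 := by rw [hpn]; push_cast; ring
    rw [hcast, prod_half_shift k n]
  rw [hg1, hg2]
  -- rewrite nat subtractions on the RHS
  have e1 : p - k - 1 = n := by omega
  have e2 : 2 * p - 1 = 2 * (n + k) + 1 := by omega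
  have e3 : p - 1 = n + k := by omega
  rw [show n + 1 - 1 = n from rfl, e2, e3]
  -- numeric identity
  have hfk : (Nat.factorial k : ℝ) ≠ 0 := by positivity
  have hfn : (Nat.factorial n : ℝ) ≠ 0 := by positivity
  have hfnk : (Nat.factorial (n + k) : ℝ) ≠ 0 := by positivity
  have hf2k1 : (Nat.factorial (2 * k + 1) : ℝ) ≠ 0 := by positivity
  have h2k1 : (2 * (k : ℝ) + 1) ≠ 0 := by positivity
  simp only [Nat.factorial_succ]
  rw [show ((4 : ℝ)) = 2 ^ 2 by norm_num, ← pow_mul]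
  push_cast
  field_simp
  ring
end

section
/- Let p ≥ 1, 0 ≤ q ≤ p-1. For the (2p-1)-sphere of radius 1, the zeta function of coexact q-forms satisfies ζ(0, U_{q,S^{2p-1}}) = (-1)^{q+1}, where ζ(s, U_{q,S^{2p-1}}) = ∑_{n=1}^{∞} m_{cex,q,n} λ_{q,n}^{-s} with λ_{q,n} = (n+q)(n+2p-q-2) and m_{cex,q,n} = (2/(q!(2p-q-2)!)) ∏_{j=1, j≠q+1}^{p} (n-1+j)(2p+n-1-j), the value at s = 0 being that of the meromorphic continuation expressed via ζ(s, U_q) = (2/(q!(2p-q-2)!)) ∑_{j=0}^{p-1} e_{p-1-j}(d^q) ζ_{-α_q, j}(s) with ζ_{t,c}(s) = ∑_{n=t+1}^{∞} (n²-t²)^{c-s}, and ζ_{t,0}(0) = -1/2 - t, ζ_{t,c}(0) = (-1)^{c+1} t^{2c}/2 - ∑_{n=1}^{t-1}(n²-t²)^c for c ≥ 1. -/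
/-- The multiset of the `p-1` numbers `d^q_j = (j-q-1)(2p-q-j-1)`,
`j ∈ {1,…,p} \ {q+1}`. -/
noncomputable def dMultiset (p q : ℕ) : Multiset ℝ :=
  (((Finset.Icc 1 p).erase (q + 1)).val).map
    (fun j => ((j : ℝ) - q - 1) * (2 * p - q - j - 1))


private lemma dMultiset_def' (p q : ℕ) :
    dMultiset p q = (((Finset.Icc 1 p).erase (q + 1)).val).map
      (fun j : ℕ => ((j : ℝ) - q - 1) * (2 * (p : ℝ) - q - j - 1)) := by
  rw [dMultiset]
  simp only [Multiset.pure_def, Multiset.bind_def, Multiset.bind_singleton, Multiset.map_map]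
  rfl

private lemma vieta_eval (s : Multiset ℝ) (x : ℝ) :
    ∑ j ∈ Finset.range (Multiset.card s + 1),
        s.esymm (Multiset.card s - j) * x ^ j
      = (s.map (fun d => x + d)).prod := by
  have h := congrArg (Polynomial.eval x) (Multiset.prod_X_add_C_eq_sum_esymm s)
  rw [Polynomial.eval_multiset_prod, Multiset.map_map] at h
  simp only [Function.comp, Polynomial.eval_add, Polynomial.eval_X, Polynomial.eval_C,
    Polynomial.eval_finset_sum, Polynomial.eval_mul, Polynomial.eval_pow] at h
  rw [h, ← Finset.sum_range_reflect (fun j => s.esymm j * x ^ (Multiset.card s - j))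
    (Multiset.card s + 1)]
  refine Finset.sum_congr rfl fun j hj => ?_
  rw [Finset.mem_range] at hj
  have e2 : Multiset.card s + 1 - 1 - j = Multiset.card s - j := by omega
  have e1 : Multiset.card s - (Multiset.card s - j) = j := by omega
  simp only [e2, e1]

private lemma prodA (t : ℕ) : ∀ k : ℕ, k ≤ t →
    (∏ m ∈ Finset.range k, ((t : ℝ) ^ 2 - (m : ℝ) ^ 2)) *
        ((t - k).factorial : ℝ) * ((t - 1).factorial : ℝ)
      = (t.factorial : ℝ) * ((t + k - 1).factorial : ℝ)
  | 0, _ => by simp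
  | (k + 1), hk => by
    have ih := prodA t k (by omega)
    rw [Finset.prod_range_succ]
    have h1 : t - k = (t - (k + 1)) + 1 := by omega
    have h2 : t + (k + 1) - 1 = (t + k - 1) + 1 := by omega
    rw [h2, Nat.factorial_succ]
    rw [h1, Nat.factorial_succ] at ih
    have h3 : ((t - (k + 1) : ℕ) : ℝ) = (t : ℝ) - k - 1 := by
      rw [Nat.cast_sub (by omega : k + 1 ≤ t)]; push_cast; ring
    have h4 : ((t + k - 1 : ℕ) : ℝ) = (t : ℝ) + k - 1 := by
      rw [Nat.cast_sub (by omega : 1 ≤ t + k)]; push_cast; ring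
    push_cast [h3, h4] at ih ⊢
    linear_combination ((t : ℝ) + (k : ℝ)) * ih

private lemma prodB (t : ℕ) : ∀ k : ℕ,
    (∏ m ∈ Finset.Icc (t + 1) (t + k), ((m : ℝ) ^ 2 - (t : ℝ) ^ 2)) *
        ((2 * t).factorial : ℝ)
      = (k.factorial : ℝ) * ((2 * t + k).factorial : ℝ)
  | 0 => by simp
  | (k + 1) => by
    have ih := prodB t k
    rw [show t + (k + 1) = (t + k) + 1 by ring,
      Finset.prod_Icc_succ_top (by omega : t + 1 ≤ (t + k) + 1)]
    rw [Nat.factorial_succ, show 2 * t + (k + 1) = (2 * t + k) + 1 by ring, Nat.factorial_succ]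
    push_cast at ih ⊢
    linear_combination ((k : ℝ) + 1) * ((2 * (t : ℝ)) + k + 1) * ih

private lemma fact_pred (n : ℕ) (h : 1 ≤ n) :
    ((n.factorial : ℕ) : ℝ) = (n : ℝ) * ((n - 1).factorial : ℝ) := by
  obtain ⟨m, rfl⟩ : ∃ m, n = m + 1 := ⟨n - 1, by omega⟩
  simp only [Nat.factorial_succ, Nat.add_sub_cancel]
  push_cast
  ring

private lemma dMultiset_eq (p q : ℕ) (hp : 1 ≤ p) (hq : q ≤ p - 1) :
    dMultiset p q = (((Finset.range p).erase (p - 1 - q)).val).map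
      (fun m : ℕ => ((p : ℝ) - q - 1) ^ 2 - (m : ℝ) ^ 2) := by
  have hmap : (((Finset.Icc 1 p).erase (q + 1)).val).map (fun j => p - j)
      = ((Finset.range p).erase (p - 1 - q)).val := by
    have hnd : ((((Finset.Icc 1 p).erase (q + 1)).val).map (fun j => p - j)).Nodup := by
      refine Multiset.Nodup.map_on ?_ (Finset.nodup _)
      intro a ha b hb h
      rw [Finset.mem_val, Finset.mem_erase, Finset.mem_Icc] at ha hb
      omega
    rw [Multiset.Nodup.ext hnd (Finset.nodup _)]
    intro m
    rw [Multiset.mem_map]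
    simp only [Finset.mem_val, Finset.mem_erase, Finset.mem_Icc, Finset.mem_range]
    constructor
    · rintro ⟨j, ⟨hj1, hj2, hj3⟩, rfl⟩; omega
    · rintro ⟨h1, h2⟩; exact ⟨p - m, by omega, by omega⟩
  rw [dMultiset_def', ← hmap, Multiset.map_map]
  refine Multiset.map_congr rfl ?_
  intro j hj
  rw [Finset.mem_val, Finset.mem_erase, Finset.mem_Icc] at hj
  simp only [Function.comp]
  rw [Nat.cast_sub hj.2.2]
  ring

/-- The value at `s = 0` of the zeta function of coexact `q`-forms on `S^{2p-1}`
is `(-1)^{q+1}`, expressed as a finite combinatorial identity via the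
meromorphic continuation `ζ(s, U_q) = (2/(q!(2p-q-2)!)) ∑_j e_{p-1-j}(d^q) ζ_{-α_q,j}(s)`
with `ζ_{t,0}(0) = -1/2 - t` and `ζ_{t,c}(0) = (-1)^{c+1} t^{2c}/2 - ∑_{n=1}^{t-1}(n²-t²)^c`. -/
theorem zeta_coexact_at_zero (p q : ℕ) (hp : 1 ≤ p) (hq : q ≤ p - 1) :
    (2 / ((Nat.factorial q : ℝ) * (Nat.factorial (2 * p - q - 2) : ℝ))) *
        ((dMultiset p q).esymm (p - 1) * (-(1 / 2) - ((p : ℝ) - q - 1)) +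
          ∑ j ∈ Finset.Icc 1 (p - 1),
            (dMultiset p q).esymm (p - 1 - j) *
              ((-1 : ℝ) ^ (j + 1) * ((q : ℝ) - p + 1) ^ (2 * j) / 2 -
                ∑ n ∈ Finset.Icc 1 (p - q - 2),
                  ((n : ℝ) ^ 2 - ((q : ℝ) - p + 1) ^ 2) ^ j))
      = (-1 : ℝ) ^ (q + 1) := by
  set t := p - 1 - q with ht
  have htp : t < p := by omega
  set T : ℝ := (p : ℝ) - q - 1 with hTdef
  have hT : ((t : ℕ) : ℝ) = T := by
    rw [ht, hTdef, Nat.cast_sub hq, Nat.cast_sub hp]; push_cast; ring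
  have hrep := dMultiset_eq p q hp hq
  have hcard : Multiset.card (dMultiset p q) = p - 1 := by
    rw [hrep, Multiset.card_map]
    exact (by rw [Finset.card_erase_of_mem (Finset.mem_range.2 htp), Finset.card_range] :
      ((Finset.range p).erase t).card = p - 1)
  have hQ : ∀ x : ℝ, ∑ j ∈ Finset.range p, (dMultiset p q).esymm (p - 1 - j) * x ^ j
      = ((dMultiset p q).map (fun d => x + d)).prod := by
    intro x
    have h := vieta_eval (dMultiset p q) x
    rw [hcard, show p - 1 + 1 = p by omega] at h
    exact h
  have hmem : ∀ n : ℕ, n < p → n ≠ t → (T ^ 2 - (n : ℝ) ^ 2) ∈ dMultiset p q := by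
    intro n hn hnt
    rw [hrep]
    exact Multiset.mem_map.2 ⟨n, by
      rw [Finset.mem_val, Finset.mem_erase]; exact ⟨hnt, Finset.mem_range.2 hn⟩, rfl⟩
  have hQ0 : ∀ n : ℕ, n < p → n ≠ t →
      ∑ j ∈ Finset.range p, (dMultiset p q).esymm (p - 1 - j) * ((n : ℝ) ^ 2 - T ^ 2) ^ j
        = 0 := by
    intro n hn hnt
    rw [hQ]
    exact Multiset.prod_eq_zero (Multiset.mem_map.2 ⟨_, hmem n hn hnt, by ring⟩)
  have hrange : Finset.range p = insert 0 (Finset.Icc 1 (p - 1)) := by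
    ext m; simp; omega
  have h0 : (0 : ℕ) ∉ Finset.Icc 1 (p - 1) := by simp
  have hsplit : ∀ x : ℝ,
      (dMultiset p q).esymm (p - 1) * x ^ 0 +
          ∑ j ∈ Finset.Icc 1 (p - 1), (dMultiset p q).esymm (p - 1 - j) * x ^ j
        = ∑ j ∈ Finset.range p, (dMultiset p q).esymm (p - 1 - j) * x ^ j := by
    intro x
    rw [hrange, Finset.sum_insert h0]
    norm_num
  have hE : (dMultiset p q).esymm (p - 1) = (dMultiset p q).prod := by
    have h := hQ 0
    rw [← hsplit 0, pow_zero, mul_one] at h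
    rw [Finset.sum_eq_zero (fun j hj => by
      rw [Finset.mem_Icc] at hj
      rw [zero_pow (by omega : j ≠ 0), mul_zero])] at h
    simpa using h
  have hfq : ((q.factorial : ℝ)) ≠ 0 := Nat.cast_ne_zero.2 q.factorial_ne_zero
  have hf2 : (((2 * p - q - 2).factorial : ℝ)) ≠ 0 :=
    Nat.cast_ne_zero.2 (2 * p - q - 2).factorial_ne_zero
  rcases Nat.eq_zero_or_pos t with h0t | h1t
  · -- case t = 0, i.e. q = p - 1
    have hTz : T = 0 := by rw [← hT, h0t]; simp
    have hIcc0 : Finset.Icc 1 (p - q - 2) = ∅ := by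
      rw [show p - q - 2 = 0 by omega]
      exact Finset.Icc_eq_empty (by omega)
    have hcastq : ((q : ℝ) - p + 1) = -T := by rw [hTdef]; ring
    have hzero : ∑ j ∈ Finset.Icc 1 (p - 1),
        (dMultiset p q).esymm (p - 1 - j) *
          ((-1 : ℝ) ^ (j + 1) * ((q : ℝ) - p + 1) ^ (2 * j) / 2 -
            ∑ n ∈ Finset.Icc 1 (p - q - 2),
              ((n : ℝ) ^ 2 - ((q : ℝ) - p + 1) ^ 2) ^ j) = 0 := by
      refine Finset.sum_eq_zero fun j hj => ?_
      rw [Finset.mem_Icc] at hj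
      rw [hIcc0, Finset.sum_empty, hcastq, hTz]
      rw [show (-(0:ℝ)) = 0 by ring, zero_pow (by omega : 2 * j ≠ 0)]
      ring
    have hprod : (dMultiset p q).prod
        = (-1 : ℝ) ^ q * (q.factorial : ℝ) * ((2 * p - q - 2).factorial : ℝ) := by
      rw [hrep, ← Finset.prod_eq_multiset_prod]
      have hset : (Finset.range p).erase t = Finset.Icc 1 (p - 1) := by
        ext m; simp; omega
      rw [hset]
      have hsign : ∀ m ∈ Finset.Icc 1 (p - 1),
          ((p : ℝ) - q - 1) ^ 2 - (m : ℝ) ^ 2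
            = (-1 : ℝ) * ((m : ℝ) ^ 2 - ((0 : ℕ) : ℝ) ^ 2) := by
        intro m _
        have : ((p : ℝ) - q - 1) = 0 := by rw [← hTdef, hTz]
        rw [this]; push_cast; ring
      rw [Finset.prod_congr rfl hsign, Finset.prod_mul_distrib, Finset.prod_const]
      have hB := prodB 0 (p - 1)
      simp only [Nat.mul_zero, Nat.zero_add, Nat.factorial_zero, Nat.cast_one, mul_one,
        Nat.zero_add] at hB
      rw [hB, Nat.card_Icc, show p - 1 + 1 - 1 = q by omega, show p - 1 = q by omega,
        show 2 * p - q - 2 = q by omega]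
      ring
    rw [hzero, hE, hprod, add_zero, hTz, pow_succ]
    field_simp
    ring
  · -- case t ≥ 1
    have hprod : (dMultiset p q).prod
        = (-1 : ℝ) ^ q * (q.factorial : ℝ) * ((2 * p - q - 2).factorial : ℝ) / 2 := by
      rw [hrep, ← Finset.prod_eq_multiset_prod]
      have hset : (Finset.range p).erase t
          = Finset.range t ∪ Finset.Icc (t + 1) (t + q) := by
        ext m; simp; omega
      have hdisj : Disjoint (Finset.range t) (Finset.Icc (t + 1) (t + q)) := by
        rw [Finset.disjoint_left]; intro a ha hb
        rw [Finset.mem_range] at ha; rw [Finset.mem_Icc] at hb; omega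
      rw [hset, Finset.prod_union hdisj]
      have hsign : ∀ m ∈ Finset.Icc (t + 1) (t + q),
          ((p : ℝ) - q - 1) ^ 2 - (m : ℝ) ^ 2
            = (-1 : ℝ) * ((m : ℝ) ^ 2 - ((t : ℕ) : ℝ) ^ 2) := by
        intro m _; rw [hT]; ring
      have hfix : ∀ m ∈ Finset.range t,
          ((p : ℝ) - q - 1) ^ 2 - (m : ℝ) ^ 2
            = ((t : ℕ) : ℝ) ^ 2 - (m : ℝ) ^ 2 := by
        intro m _; rw [hT]
      rw [Finset.prod_congr rfl hsign, Finset.prod_congr rfl hfix,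
        Finset.prod_mul_distrib, Finset.prod_const, Nat.card_Icc,
        show t + q + 1 - (t + 1) = q by omega]
      have hA := prodA t t le_rfl
      rw [Nat.sub_self, Nat.factorial_zero, Nat.cast_one, mul_one] at hA
      have hB := prodB t q
      rw [show 2 * t + q = 2 * p - q - 2 by omega] at hB
      have hfac1 := fact_pred t (by omega)
      have hfac2 := fact_pred (2 * t) (by omega)
      rw [show t + t - 1 = 2 * t - 1 by omega] at hA
      have hne1 : (((t - 1).factorial : ℕ) : ℝ) ≠ 0 :=
        Nat.cast_ne_zero.2 (t - 1).factorial_ne_zero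
      rw [hfac1] at hA
      rw [hfac2] at hB
      push_cast at hB
      have hP1 : (∏ m ∈ Finset.range t, (((t : ℕ) : ℝ) ^ 2 - (m : ℝ) ^ 2))
          = (t : ℝ) * (((2 * t - 1).factorial : ℕ) : ℝ) :=
        mul_right_cancel₀ hne1 (by linear_combination hA)
      rw [hP1]
      linear_combination ((-1 : ℝ) ^ q / 2) * hB
    -- assembly
    have hcastq : ((q : ℝ) - p + 1) = -T := by rw [hTdef]; ring
    have hS1 : ∑ j ∈ Finset.Icc 1 (p - 1),
        (dMultiset p q).esymm (p - 1 - j) * (-T ^ 2) ^ j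
          = -((dMultiset p q).esymm (p - 1)) := by
      have h := hQ0 0 (by omega) (by omega)
      rw [show (((0 : ℕ) : ℝ) ^ 2 - T ^ 2) = -T ^ 2 by push_cast; ring] at h
      rw [← hsplit (-T ^ 2), pow_zero, mul_one] at h
      linarith
    have hS2 : ∀ n ∈ Finset.Icc 1 (p - q - 2),
        ∑ j ∈ Finset.Icc 1 (p - 1),
            (dMultiset p q).esymm (p - 1 - j) * ((n : ℝ) ^ 2 - T ^ 2) ^ j
          = -((dMultiset p q).esymm (p - 1)) := by
      intro n hn
      rw [Finset.mem_Icc] at hn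
      have h := hQ0 n (by omega) (by omega)
      rw [← hsplit ((n : ℝ) ^ 2 - T ^ 2), pow_zero, mul_one] at h
      linarith
    have hpoint : ∀ j ∈ Finset.Icc 1 (p - 1),
        (dMultiset p q).esymm (p - 1 - j) *
            ((-1 : ℝ) ^ (j + 1) * ((q : ℝ) - p + 1) ^ (2 * j) / 2 -
              ∑ n ∈ Finset.Icc 1 (p - q - 2),
                ((n : ℝ) ^ 2 - ((q : ℝ) - p + 1) ^ 2) ^ j)
          = -(1 / 2) * ((dMultiset p q).esymm (p - 1 - j) * (-T ^ 2) ^ j) -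
              ∑ n ∈ Finset.Icc 1 (p - q - 2),
                (dMultiset p q).esymm (p - 1 - j) * ((n : ℝ) ^ 2 - T ^ 2) ^ j := by
      intro j hj
      rw [hcastq]
      have h1 : (-1 : ℝ) ^ (j + 1) * (-T) ^ (2 * j) / 2 = -(1 / 2) * (-T ^ 2) ^ j := by
        rw [pow_mul, neg_sq, pow_succ, show (-T ^ 2 : ℝ) = (-1) * T ^ 2 by ring, mul_pow]
        ring
      rw [h1, show ((-T) ^ 2 : ℝ) = T ^ 2 by ring, mul_sub, Finset.mul_sum]
      ring
    have hsum : ∑ j ∈ Finset.Icc 1 (p - 1),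
        (dMultiset p q).esymm (p - 1 - j) *
            ((-1 : ℝ) ^ (j + 1) * ((q : ℝ) - p + 1) ^ (2 * j) / 2 -
              ∑ n ∈ Finset.Icc 1 (p - q - 2),
                ((n : ℝ) ^ 2 - ((q : ℝ) - p + 1) ^ 2) ^ j)
          = -(1 / 2) * (∑ j ∈ Finset.Icc 1 (p - 1),
                (dMultiset p q).esymm (p - 1 - j) * (-T ^ 2) ^ j) -
              ∑ n ∈ Finset.Icc 1 (p - q - 2), ∑ j ∈ Finset.Icc 1 (p - 1),
                (dMultiset p q).esymm (p - 1 - j) * ((n : ℝ) ^ 2 - T ^ 2) ^ j := by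
      rw [Finset.sum_congr rfl hpoint, Finset.sum_sub_distrib, ← Finset.mul_sum,
        Finset.sum_comm]
    rw [hsum, hS1, Finset.sum_congr rfl hS2, Finset.sum_const, Nat.card_Icc,
      show p - q - 2 + 1 - 1 = t - 1 by omega]
    have htm1 : (((t - 1 : ℕ)) : ℝ) = T - 1 := by
      rw [Nat.cast_sub (by omega : 1 ≤ t), hT]; push_cast; ring
    rw [nsmul_eq_mul, htm1, hE, hprod, pow_succ]
    field_simp
    ring
end
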